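/- Assume Hypothesis (⋆). Let p be a prime, (x,y) an arc and E_x = ⟨O_p(G_{x,z}) : z ∈ Δ(x)⟩. If E_x ⊄ G_x^{[1]}, then G_y^{[2]} is a p-group. -/

import Mathlib

open Equiv Subgroup

set_option linter.unusedSectionVars false
set_option linter.unusedVariables false


/-- `N` (a subgroup of `Perm V`) acts transitively on the neighbourhood of `x`. -/
def transOn {V : Type*} (Δ : SimpleGraph V) (N : Subgroup (Equiv.Perm V)) (x : V) : Prop :=
  ∀ u ∈ Δ.neighborSet x, ∀ v ∈ Δ.neighborSet x, ∃ g ∈ N, g u = v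

/-- The permutation group induced by `N` on the neighbourhood of `x` is semiregular. -/
def semiregOn {V : Type*} (Δ : SimpleGraph V) (N : Subgroup (Equiv.Perm V)) (x : V) : Prop :=
  ∀ g ∈ N, (∃ u ∈ Δ.neighborSet x, g u = u) → ∀ v ∈ Δ.neighborSet x, g v = v

/-- The stabiliser `G_x`. -/
def vstab {V : Type*} (G : Subgroup (Equiv.Perm V)) (x : V) : Subgroup (Equiv.Perm V) :=
  G ⊓ MulAction.stabilizer (Equiv.Perm V) x

/-- `G_x^{[i]}`: pointwise stabiliser of the ball of radius `i` around `x`. -/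
def ball {V : Type*} (Δ : SimpleGraph V) (G : Subgroup (Equiv.Perm V)) (x : V) (i : ℕ) :
    Subgroup (Equiv.Perm V) :=
  G ⊓ ⨅ z ∈ {z : V | Δ.dist x z ≤ i}, MulAction.stabilizer (Equiv.Perm V) z

/-- `K` is a normal subgroup of `H` (both subgroups of `Perm V`). -/
def normalIn {V : Type*} (K H : Subgroup (Equiv.Perm V)) : Prop :=
  K ≤ H ∧ ∀ h ∈ H, ∀ k ∈ K, h * k * h⁻¹ ∈ K

/-- `O_p(H)`: the largest normal `p`-subgroup of `H`. -/
def Op {V : Type*} (p : ℕ) (H : Subgroup (Equiv.Perm V)) : Subgroup (Equiv.Perm V) :=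
  sSup {K | normalIn K H ∧ IsPGroup p K}

/-- `E_x = ⟨O_p(G_{x,z}) : z ∈ Δ(x)⟩`. -/
def Ep {V : Type*} (Δ : SimpleGraph V) (G : Subgroup (Equiv.Perm V)) (p : ℕ) (x : V) :
    Subgroup (Equiv.Perm V) :=
  ⨆ z ∈ Δ.neighborSet x, Op p (vstab G x ⊓ vstab G z)

/-- `C_{G_x}(G_x^{[1]})`. -/
def locCent {V : Type*} (Δ : SimpleGraph V) (G : Subgroup (Equiv.Perm V)) (x : V) :
    Subgroup (Equiv.Perm V) :=
  vstab G x ⊓ Subgroup.centralizer ((ball Δ G x 1 : Subgroup (Equiv.Perm V)) : Set (Equiv.Perm V))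

/-- Hypothesis (⋆). -/
def StarHyp {V : Type*} (Δ : SimpleGraph V) (G : Subgroup (Equiv.Perm V)) : Prop :=
  ∀ x : V,
    transOn Δ (vstab G x) x ∧
    (transOn Δ (locCent Δ G x) x ∨ semiregOn Δ (locCent Δ G x) x) ∧
    ∀ p : ℕ, p.Prime → (transOn Δ (Ep Δ G p x) x ∨ semiregOn Δ (Ep Δ G p x) x)

/-- `G` is a group of automorphisms of `Δ`. -/
def isAut {V : Type*} (Δ : SimpleGraph V) (G : Subgroup (Equiv.Perm V)) : Prop :=
  ∀ g ∈ G, ∀ u v : V, Δ.Adj (g u) (g v) ↔ Δ.Adj u v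

/-- `K` is a subnormal subgroup of `H`. -/
def subnormalIn {V : Type*} (K H : Subgroup (Equiv.Perm V)) : Prop :=
  ∃ (n : ℕ) (c : ℕ → Subgroup (Equiv.Perm V)),
    c 0 = K ∧ c n = H ∧ ∀ i < n, normalIn (c i) (c (i + 1))

/-- `K` is quasisimple: perfect and simple modulo its centre. -/
def IsQuasisimple {V : Type*} (K : Subgroup (Equiv.Perm V)) : Prop :=
  commutator ↥K = ⊤ ∧ IsSimpleGroup (↥K ⧸ Subgroup.center ↥K)

/-- `E(H)`: the layer, generated by the components of `H`. -/
def layer {V : Type*} (H : Subgroup (Equiv.Perm V)) : Subgroup (Equiv.Perm V) :=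
  sSup {K | subnormalIn K H ∧ IsQuasisimple K}

/-- `F(H)`: the Fitting subgroup of `H`. -/
def fitting {V : Type*} (H : Subgroup (Equiv.Perm V)) : Subgroup (Equiv.Perm V) :=
  sSup {K | normalIn K H ∧ Group.IsNilpotent ↥K}

/-- `F*(H) = E(H)F(H)`: the generalised Fitting subgroup of `H`. -/
def genFitting {V : Type*} (H : Subgroup (Equiv.Perm V)) : Subgroup (Equiv.Perm V) :=
  layer H ⊔ fitting H

namespace Stmt9Aux

variable {V : Type*} [Fintype V] {Δ : SimpleGraph V} {G : Subgroup (Equiv.Perm V)}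

theorem _root_.Equiv.Perm.apply_inv_self {α : Type*} (f : Equiv.Perm α) (x : α) : f (f⁻¹ x) = x :=
  f.apply_symm_apply x

theorem _root_.Equiv.Perm.inv_apply_self {α : Type*} (f : Equiv.Perm α) (x : α) : f⁻¹ (f x) = x :=
  f.symm_apply_apply x

theorem mem_vstab_iff {g : Equiv.Perm V} {x : V} :
    g ∈ vstab G x ↔ g ∈ G ∧ g x = x := by
  simp [vstab, Subgroup.mem_inf, MulAction.mem_stabilizer_iff, Equiv.Perm.smul_def]

theorem mem_ball_iff {g : Equiv.Perm V} {x : V} {i : ℕ} :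
    g ∈ ball Δ G x i ↔ g ∈ G ∧ ∀ z : V, Δ.dist x z ≤ i → g z = z := by
  simp [ball, Subgroup.mem_inf, Subgroup.mem_iInf, MulAction.mem_stabilizer_iff,
    Equiv.Perm.smul_def, Set.mem_setOf_eq]

theorem ball_le_G {x : V} {i : ℕ} : ball Δ G x i ≤ G := inf_le_left

theorem dist_le_one_of_adj {u v : V} (h : Δ.Adj u v) : Δ.dist u v ≤ 1 := by
  simpa using SimpleGraph.dist_le (SimpleGraph.Walk.cons h SimpleGraph.Walk.nil)

theorem dist_le_two_of_adj_adj {u v w : V} (h1 : Δ.Adj u v) (h2 : Δ.Adj v w) :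
    Δ.dist u w ≤ 2 := by
  simpa using SimpleGraph.dist_le
    (SimpleGraph.Walk.cons h1 (SimpleGraph.Walk.cons h2 SimpleGraph.Walk.nil))

theorem exists_mid_of_dist_two (hconn : Δ.Connected) {u w : V} (h : Δ.dist u w = 2) :
    ∃ v, Δ.Adj u v ∧ Δ.Adj v w := by
  obtain ⟨pw, hpw⟩ := hconn.exists_walk_length_eq_dist u w
  rw [h] at hpw
  cases pw with
  | nil => simp at hpw
  | cons h1 q =>
    cases q with
    | nil => simp at hpw
    | cons h2 r =>
      cases r with
      | nil => exact ⟨_, h1, h2⟩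
      | cons h3 s => simp [SimpleGraph.Walk.length_cons] at hpw

/-- an automorphism in `G` preserves distances -/
theorem dist_map (hconn : Δ.Connected) (hG : isAut Δ G) {g : Equiv.Perm V} (hg : g ∈ G)
    (u v : V) : Δ.dist (g u) (g v) = Δ.dist u v := by
  have key : ∀ g' : Equiv.Perm V, g' ∈ G → ∀ a b : V, Δ.dist (g' a) (g' b) ≤ Δ.dist a b := by
    intro g' hg' a b
    obtain ⟨pw, hpw⟩ := hconn.exists_walk_length_eq_dist a b
    let f : Δ →g Δ := ⟨g', fun hab => (hG g' hg' _ _).mpr hab⟩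
    calc Δ.dist (g' a) (g' b) ≤ (pw.map f).length := SimpleGraph.dist_le _
    _ = pw.length := SimpleGraph.Walk.length_map _ _
    _ = Δ.dist a b := hpw
  refine le_antisymm (key g hg u v) ?_
  have := key g⁻¹ (inv_mem hg) (g u) (g v)
  simpa using this

theorem conj_mem_vstab {g k : Equiv.Perm V} {u : V} (hg : g ∈ G) (hk : k ∈ vstab G u) :
    g * k * g⁻¹ ∈ vstab G (g u) := by
  obtain ⟨hkG, hku⟩ := mem_vstab_iff.mp hk
  refine mem_vstab_iff.mpr ⟨mul_mem (mul_mem hg hkG) (inv_mem hg), ?_⟩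
  simp [Equiv.Perm.mul_apply, hku]

theorem conj_mem_ball (hconn : Δ.Connected) (hG : isAut Δ G) {g k : Equiv.Perm V} {u : V}
    {i : ℕ} (hg : g ∈ G) (hk : k ∈ ball Δ G u i) : g * k * g⁻¹ ∈ ball Δ G (g u) i := by
  obtain ⟨hkG, hkfix⟩ := mem_ball_iff.mp hk
  refine mem_ball_iff.mpr ⟨mul_mem (mul_mem hg hkG) (inv_mem hg), ?_⟩
  intro z hz
  have hz' : Δ.dist u (g⁻¹ z) ≤ i := by
    have := dist_map hconn hG hg u (g⁻¹ z)
    simp only [Equiv.Perm.apply_inv_self] at this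
    omega
  have := hkfix _ hz'
  simp only [Equiv.Perm.mul_apply, this, Equiv.Perm.apply_inv_self]

theorem Op_le {p : ℕ} {H : Subgroup (Equiv.Perm V)} : Op p H ≤ H :=
  sSup_le fun _ hK => hK.1.1

theorem le_normalizer_of_normalIn {K H : Subgroup (Equiv.Perm V)} (h : normalIn K H) :
    H ≤ Subgroup.normalizer (K : Set (Equiv.Perm V)) := by
  intro g hg
  rw [Subgroup.mem_normalizer_iff]
  intro k
  constructor
  · intro hk
    exact h.2 g hg k hk
  · intro hk
    have := h.2 g⁻¹ (inv_mem hg) _ hk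
    simpa [mul_assoc] using this

theorem Op_conj {p : ℕ} {H : Subgroup (Equiv.Perm V)} {h k : Equiv.Perm V} (hh : h ∈ H)
    (hk : k ∈ Op p H) : h * k * h⁻¹ ∈ Op p H := by
  have hmap : Subgroup.map (MulAut.conj h).toMonoidHom (Op p H) ≤ Op p H := by
    rw [Op, (Subgroup.gc_map_comap _).l_sSup]
    refine iSup_le fun K => iSup_le fun hK => le_sSup ?_
    refine ⟨⟨?_, ?_⟩, hK.2.map _⟩
    · rintro a ⟨b, hb, rfl⟩
      simp only [MulEquiv.coe_toMonoidHom, MulAut.conj_apply]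
      exact mul_mem (mul_mem hh (hK.1.1 hb)) (inv_mem hh)
    · rintro g hg a ⟨b, hb, rfl⟩
      refine ⟨(h⁻¹ * g * h) * b * (h⁻¹ * g * h)⁻¹, hK.1.2 _ (mul_mem (mul_mem (inv_mem hh) hg) hh) b hb, ?_⟩
      simp only [MulEquiv.coe_toMonoidHom, MulAut.conj_apply]
      group
  exact hmap ⟨k, hk, by simp [MulAut.conj_apply]⟩

theorem Op_normalIn {p : ℕ} {H : Subgroup (Equiv.Perm V)} : normalIn (Op p H) H :=
  ⟨Op_le, fun h hh k hk => Op_conj hh hk⟩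

theorem Op_isPGroup {p : ℕ} (hp : p.Prime) (H : Subgroup (Equiv.Perm V)) :
    IsPGroup p (Op p H) := by
  classical
  haveI : Fact p.Prime := ⟨hp⟩
  haveI : Finite (Subgroup (Equiv.Perm V)) :=
    Finite.of_injective (fun K => (K : Set (Equiv.Perm V))) SetLike.coe_injective
  have key : ∀ T : Set (Subgroup (Equiv.Perm V)),
      T ⊆ {K | normalIn K H ∧ IsPGroup p K} → IsPGroup p (sSup T : Subgroup (Equiv.Perm V)) := by
    intro T
    refine Set.Finite.induction_on_subset (motive := fun s _ => s ⊆ {K | normalIn K H ∧ IsPGroup p K} → IsPGroup p (sSup s : Subgroup (Equiv.Perm V))) T (Set.toFinite T) ?_ ?_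
    · intro _
      rw [sSup_empty]
      exact IsPGroup.of_card (by rw [Subgroup.card_bot, pow_zero])
    · intro K s hKT hsT hKs ih hsub
      rw [sSup_insert]
      have hK := hsub (Set.mem_insert _ _)
      have hs : IsPGroup p (sSup s : Subgroup (Equiv.Perm V)) := ih (fun a ha => hsub (Set.mem_insert_of_mem _ ha))
      refine IsPGroup.to_sup_of_normal_left' hK.2 hs ?_
      refine sSup_le fun K' hK' => ?_
      exact le_trans (hsub (Set.mem_insert_of_mem _ hK')).1.1 (le_normalizer_of_normalIn hK.1)
  exact key _ le_rfl



theorem fix_of_ball2 {x z₀ : V} (hz₀ : Δ.Adj x z₀) {c : Equiv.Perm V}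
    (hc : c ∈ ball Δ G z₀ 2) : c ∈ G ∧ c x = x ∧ ∀ u, Δ.Adj x u → c u = u := by
  obtain ⟨hcG, hfix⟩ := mem_ball_iff.mp hc
  exact ⟨hcG, hfix x (le_trans (dist_le_one_of_adj hz₀.symm) one_le_two),
    fun u hu => hfix u (dist_le_two_of_adj_adj hz₀.symm hu)⟩

theorem exists_commuting_rep (hconn : Δ.Connected) (hG : isAut Δ G) {p : ℕ} (hp : p.Prime)
    {x z₀ w : V} (hz₀ : Δ.Adj x z₀) (hw : Δ.Adj x w)
    {h : Equiv.Perm V} (hball : h ∈ ball Δ G z₀ 2) (hq : (orderOf h).Prime)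
    (hqp : orderOf h ≠ p)
    {a : Equiv.Perm V} (ha : a ∈ Op p (vstab G x ⊓ vstab G w)) :
    ∃ b : Equiv.Perm V, b ∈ Op p (vstab G x ⊓ vstab G w) ∧ h * b = b * h ∧
      ∀ u, Δ.Adj x u → b u = a u := by
  classical
  haveI : Fact (orderOf h).Prime := ⟨hq⟩
  haveI : Fact p.Prime := ⟨hp⟩
  set Qw := Op p (vstab G x ⊓ vstab G w) with hQwdef
  have hball2 : ∀ c ∈ Subgroup.zpowers h, c ∈ ball Δ G z₀ 2 :=
    fun c hc => (Subgroup.zpowers_le.mpr hball) hc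
  have hcmem : ∀ c ∈ Subgroup.zpowers h, c ∈ vstab G x ⊓ vstab G w := by
    intro c hc
    obtain ⟨hcG, hcx, hcfix⟩ := fix_of_ball2 hz₀ (hball2 c hc)
    exact Subgroup.mem_inf.mpr ⟨mem_vstab_iff.mpr ⟨hcG, hcx⟩,
      mem_vstab_iff.mpr ⟨hcG, hcfix w hw⟩⟩
  have haQ : a ∈ Qw := ha
  have haG : a ∈ G ∧ a x = x := by
    have h1 := Op_le ha
    rw [Subgroup.mem_inf] at h1
    exact mem_vstab_iff.mp h1.1
  let α := {b : Equiv.Perm V // b ∈ Qw ∧ ∀ u, Δ.Adj x u → b u = a u}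
  have hsmul : ∀ (c : ↥(Subgroup.zpowers h)) (b : α),
      (c : Equiv.Perm V) * ↑b * (c : Equiv.Perm V)⁻¹ ∈ Qw ∧
      ∀ u, Δ.Adj x u → ((c : Equiv.Perm V) * ↑b * (c : Equiv.Perm V)⁻¹) u = a u := by
    rintro c b
    constructor
    · exact Op_conj (hcmem _ c.2) b.2.1
    · intro u hu
      obtain ⟨_, _, hcfix⟩ := fix_of_ball2 hz₀ (hball2 _ c.2)
      obtain ⟨_, _, hcifix⟩ := fix_of_ball2 hz₀ (hball2 _ (inv_mem c.2))
      have hau : Δ.Adj x (a u) := by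
        have := (hG a haG.1 x u).mpr hu
        rwa [haG.2] at this
      simp only [Equiv.Perm.mul_apply]
      rw [hcifix u hu, b.2.2 u hu, hcfix _ hau]
  letI inst1 : SMul ↥(Subgroup.zpowers h) α :=
    ⟨fun c b => ⟨(c : Equiv.Perm V) * ↑b * (c : Equiv.Perm V)⁻¹,
        (hsmul c b).1, (hsmul c b).2⟩⟩
  letI : MulAction ↥(Subgroup.zpowers h) α :=
    { one_smul := fun b => Subtype.ext (by
        show ((1 : ↥(Subgroup.zpowers h)) : Equiv.Perm V) * ↑b *
            ((1 : ↥(Subgroup.zpowers h)) : Equiv.Perm V)⁻¹ = ↑b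
        simp)
      mul_smul := fun c1 c2 b => Subtype.ext (by
        show ((c1 * c2 : ↥(Subgroup.zpowers h)) : Equiv.Perm V) * ↑b *
            ((c1 * c2 : ↥(Subgroup.zpowers h)) : Equiv.Perm V)⁻¹
            = (c1 : Equiv.Perm V) * ((c2 : Equiv.Perm V) * ↑b * (c2 : Equiv.Perm V)⁻¹) *
              (c1 : Equiv.Perm V)⁻¹
        simp [mul_assoc]) }
  haveI : Finite (Equiv.Perm V) := by
    haveI := Classical.decEq V
    infer_instance
  haveI : Finite α := Subtype.finite
  have hq1 : IsPGroup (orderOf h) ↥(Subgroup.zpowers h) :=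
    IsPGroup.of_card (by rw [Nat.card_zpowers, pow_one])
  let K₀ : Subgroup (Equiv.Perm V) := ⨅ u ∈ Δ.neighborSet x, MulAction.stabilizer (Equiv.Perm V) u
  have hK₀ : ∀ g : Equiv.Perm V, g ∈ K₀ ↔ ∀ u, Δ.Adj x u → g u = u := by
    intro g
    simp [K₀, Subgroup.mem_iInf, MulAction.mem_stabilizer_iff, Equiv.Perm.smul_def,
      SimpleGraph.mem_neighborSet]
  let e : α ≃ ↥(Qw ⊓ K₀) :=
    { toFun := fun b => ⟨a⁻¹ * ↑b, Subgroup.mem_inf.mpr ⟨mul_mem (inv_mem haQ) b.2.1,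
        (hK₀ _).mpr (fun u hu => by
          simp only [Equiv.Perm.mul_apply]
          rw [b.2.2 u hu, Equiv.Perm.inv_apply_self])⟩⟩
      invFun := fun c => ⟨a * ↑c, mul_mem haQ ((Subgroup.mem_inf.mp c.2).1),
        fun u hu => by
          simp only [Equiv.Perm.mul_apply]
          rw [(hK₀ _).mp (Subgroup.mem_inf.mp c.2).2 u hu]⟩
      left_inv := fun b => Subtype.ext (by simp)
      right_inv := fun c => Subtype.ext (by simp) }
  have hcard : Nat.card α = Nat.card ↥(Qw ⊓ K₀) := Nat.card_congr e
  have hdvd : Nat.card ↥(Qw ⊓ K₀) ∣ Nat.card ↥Qw := Subgroup.card_dvd_of_le inf_le_left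
  obtain ⟨n, hn⟩ := (IsPGroup.iff_card).mp (Op_isPGroup hp (vstab G x ⊓ vstab G w))
  have hndvd : ¬ (orderOf h) ∣ Nat.card α := by
    rw [hcard]
    intro hdq
    have h2 : (orderOf h) ∣ p ^ n := hn ▸ dvd_trans hdq hdvd
    exact hqp ((Nat.prime_dvd_prime_iff_eq hq hp).mp (hq.dvd_of_dvd_pow h2))
  obtain ⟨b, hb⟩ := hq1.nonempty_fixed_point_of_prime_not_dvd_card α hndvd
  have hbfix : (⟨h, Subgroup.mem_zpowers h⟩ : ↥(Subgroup.zpowers h)) • b = b :=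
    hb ⟨h, Subgroup.mem_zpowers h⟩
  have hbeq : h * ↑b * h⁻¹ = (b : Equiv.Perm V) := congrArg Subtype.val hbfix
  refine ⟨↑b, b.2.1, ?_, b.2.2⟩
  conv_rhs => rw [← hbeq]
  group

theorem lemA (hconn : Δ.Connected) (hG : isAut Δ G) {p : ℕ} (hp : p.Prime) {x : V}
    (htrans : transOn Δ (Ep Δ G p x) x) {z₀ z : V} (hz₀ : Δ.Adj x z₀) (hz : Δ.Adj x z)
    {h : Equiv.Perm V} (hball : h ∈ ball Δ G z₀ 2) (hq : (orderOf h).Prime)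
    (hqp : orderOf h ≠ p) :
    h ∈ ball Δ G z 2 := by
  classical
  let W : Subgroup (Equiv.Perm V) :=
    { carrier := {g | g ∈ vstab G x ∧ ∃ c : Equiv.Perm V, c ∈ G ∧ c * h = h * c ∧
        ∀ u, Δ.Adj x u → c u = g u}
      one_mem' := ⟨one_mem _, 1, one_mem G, by group, fun u _ => rfl⟩
      mul_mem' := by
        rintro g1 g2 ⟨hv1, c1, hc1G, hc1h, he1⟩ ⟨hv2, c2, hc2G, hc2h, he2⟩
        refine ⟨mul_mem hv1 hv2, c1 * c2, mul_mem hc1G hc2G, ?_, ?_⟩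
        · rw [mul_assoc, hc2h, ← mul_assoc, hc1h, mul_assoc]
        · intro u hu
          obtain ⟨hg2G, hg2x⟩ := mem_vstab_iff.mp hv2
          have hg2u : Δ.Adj x (g2 u) := by
            have := (hG g2 hg2G x u).mpr hu
            rwa [hg2x] at this
          simp only [Equiv.Perm.mul_apply]
          rw [he2 u hu, he1 _ hg2u]
      inv_mem' := by
        rintro g ⟨hv, c, hcG, hch, he⟩
        obtain ⟨hgG, hgx⟩ := mem_vstab_iff.mp hv
        refine ⟨inv_mem hv, c⁻¹, inv_mem hcG, ?_, ?_⟩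
        · have h2 : c * (h * c⁻¹) = c * (c⁻¹ * h) := by
            rw [← mul_assoc, hch]
            group
          rw [mul_left_cancel h2]
        · intro u hu
          have hgu : Δ.Adj x (g⁻¹ u) := by
            have h3 := hG g hgG x (g⁻¹ u)
            rw [hgx, Equiv.Perm.apply_inv_self] at h3
            exact h3.mp hu
          have hcv : c (g⁻¹ u) = u := by
            rw [he _ hgu, Equiv.Perm.apply_inv_self]
          conv_lhs => rw [← hcv]
          simp }
  have hQW : ∀ w, Δ.Adj x w → Op p (vstab G x ⊓ vstab G w) ≤ W := by
    intro w hw a ha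
    have haxw := Op_le ha
    obtain ⟨b, hbQ, hbh, hbe⟩ := exists_commuting_rep hconn hG hp hz₀ hw hball hq hqp ha
    have hbG : b ∈ G := (mem_vstab_iff.mp (Subgroup.mem_inf.mp (Op_le hbQ)).1).1
    exact ⟨(Subgroup.mem_inf.mp haxw).1, b, hbG, hbh.symm, hbe⟩
  have hEpW : Ep Δ G p x ≤ W := by
    rw [Ep]
    exact iSup_le fun w => iSup_le fun hw => hQW w hw
  obtain ⟨g, hgEp, hgz⟩ := htrans z₀ hz₀ z hz
  obtain ⟨hgv, c, hcG, hch, hce⟩ := hEpW hgEp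
  have hcz : c z₀ = z := by rw [hce z₀ hz₀, hgz]
  have hmem : c * h * c⁻¹ ∈ ball Δ G (c z₀) 2 := conj_mem_ball hconn hG hcG hball
  rw [hcz] at hmem
  have hconj : c * h * c⁻¹ = h := by
    rw [hch]
    group
  rwa [hconj] at hmem



theorem exists_two_step (hconn : Δ.Connected) {x v : V} {n : ℕ} (hn : 1 ≤ n)
    (hd : Δ.dist x v = n + 1) :
    ∃ z u, Δ.Adj z v ∧ Δ.Adj z u ∧ Δ.dist x z ≤ n ∧ Δ.dist x u ≤ n := by
  obtain ⟨pw, hpw⟩ := hconn.exists_walk_length_eq_dist v x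
  rw [SimpleGraph.dist_comm, hd] at hpw
  cases pw with
  | nil =>
    exfalso
    simp only [SimpleGraph.Walk.length_nil] at hpw
    omega
  | cons h1 qw =>
    cases qw with
    | nil =>
      exfalso
      simp only [SimpleGraph.Walk.length_cons, SimpleGraph.Walk.length_nil] at hpw
      omega
    | cons h2 rw2 =>
      simp only [SimpleGraph.Walk.length_cons] at hpw
      refine ⟨_, _, h1.symm, h2, ?_, ?_⟩
      · have hle := SimpleGraph.dist_le (SimpleGraph.Walk.cons h2 rw2)
        simp only [SimpleGraph.Walk.length_cons] at hle
        rw [SimpleGraph.dist_comm]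
        omega
      · have hle := SimpleGraph.dist_le rw2
        rw [SimpleGraph.dist_comm]
        omega

end Stmt9Aux

open Stmt9Aux in
theorem stmt9 {V : Type*} [Fintype V] (Δ : SimpleGraph V) (G : Subgroup (Equiv.Perm V))
    (hconn : Δ.Connected) (hG : isAut Δ G) (hstar : StarHyp Δ G)
    (p : ℕ) (hp : p.Prime) {x y : V} (hxy : Δ.Adj x y)
    (hEx : ¬ Ep Δ G p x ≤ ball Δ G x 1) :
    IsPGroup p (ball Δ G y 2) := by
  classical
  haveI : Fact p.Prime := ⟨hp⟩
  haveI : Finite (Equiv.Perm V) := by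
    haveI := Classical.decEq V
    infer_instance
  -- Step 1: Eₚ is transitive on Δ(x)
  have hEptrans : transOn Δ (Ep Δ G p x) x := by
    rcases (hstar x).2.2 p hp with ht | hs
    · exact ht
    · exfalso
      apply hEx
      simp only [Ep]
      refine iSup_le fun w => iSup_le fun hw => fun a ha => ?_
      have haxw := Op_le ha
      rw [Subgroup.mem_inf] at haxw
      obtain ⟨haG, hax⟩ := mem_vstab_iff.mp haxw.1
      obtain ⟨_, haw⟩ := mem_vstab_iff.mp haxw.2
      have haEp : a ∈ Ep Δ G p x := by
        simp only [Ep]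
        exact (le_iSup₂ (f := fun z (_ : z ∈ Δ.neighborSet x) =>
          Op p (vstab G x ⊓ vstab G z)) w hw) ha
      refine mem_ball_iff.mpr ⟨haG, ?_⟩
      intro z hz
      rcases Nat.lt_or_ge (Δ.dist x z) 1 with h0 | h1
      · have hxz : x = z := hconn.dist_eq_zero_iff.mp (by omega)
        rw [← hxz]
        exact hax
      · have hadj : Δ.Adj x z := SimpleGraph.dist_eq_one_iff_adj.mp (le_antisymm hz h1)
        exact hs a haEp ⟨w, hw, haw⟩ z hadj
  -- the generating set of q-elements
  set gen : V → Set (Equiv.Perm V) := fun v =>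
    {h : Equiv.Perm V | h ∈ ball Δ G v 2 ∧ (orderOf h).Prime ∧ orderOf h ≠ p} with hgendef
  have hgenmove : ∀ z₀ z, Δ.Adj x z₀ → Δ.Adj x z → gen z₀ ⊆ gen z := by
    intro z₀ z hz₀ hz h hh
    exact ⟨lemA hconn hG hp hEptrans hz₀ hz hh.1 hh.2.1 hh.2.2, hh.2.1, hh.2.2⟩
  have hgeneq : ∀ z, Δ.Adj x z → gen z = gen y :=
    fun z hz => le_antisymm (hgenmove z y hz hxy) (hgenmove y z hxy hz)
  set R : Subgroup (Equiv.Perm V) := Subgroup.closure (gen y) with hRdef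
  have hgenconj : ∀ g ∈ G, ∀ v : V, ∀ h ∈ gen v, g * h * g⁻¹ ∈ gen (g v) := by
    intro g hg v h hh
    have horder : orderOf (g * h * g⁻¹) = orderOf h := by
      have heq : g * h * g⁻¹ = (MulAut.conj g).toMonoidHom h := by
        simp [MulAut.conj_apply]
      rw [heq]
      exact orderOf_injective (MulAut.conj g).toMonoidHom (MulEquiv.injective _) h
    exact ⟨conj_mem_ball hconn hG hg hh.1, by rw [horder]; exact hh.2.1,
      by rw [horder]; exact hh.2.2⟩
  have hconjR : ∀ g : Equiv.Perm V, (∀ h ∈ gen y, g * h * g⁻¹ ∈ R) →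
      ∀ k ∈ R, g * k * g⁻¹ ∈ R := by
    intro g hgen' k hk
    refine Subgroup.closure_induction (k := gen y) (p := fun k _ => g * k * g⁻¹ ∈ R)
      (fun h hh => hgen' h hh) (by simpa using one_mem R) ?_ ?_ hk
    · intro k1 k2 _ _ h1 h2
      have heq : g * (k1 * k2) * g⁻¹ = (g * k1 * g⁻¹) * (g * k2 * g⁻¹) := by group
      rw [heq]
      exact mul_mem h1 h2
    · intro k1 _ h1
      have heq : g * k1⁻¹ * g⁻¹ = (g * k1 * g⁻¹)⁻¹ := by group
      rw [heq]
      exact inv_mem h1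
  set P : V → Prop := fun v =>
    R ≤ ball Δ G v 2 ∧ ∀ g ∈ vstab G v, ∀ k ∈ R, g * k * g⁻¹ ∈ R with hPdef
  have hPz : ∀ z, Δ.Adj x z → P z := by
    intro z hz
    constructor
    · rw [hRdef, Subgroup.closure_le]
      intro h hh
      have h2 : h ∈ gen z := by rw [hgeneq z hz]; exact hh
      exact h2.1
    · intro g hg k hk
      obtain ⟨hgG, hgz⟩ := mem_vstab_iff.mp hg
      refine hconjR g ?_ k hk
      intro h hh
      have h2 : h ∈ gen z := by rw [hgeneq z hz]; exact hh
      have h3 : g * h * g⁻¹ ∈ gen (g z) := hgenconj g hgG z h h2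
      rw [hgz, hgeneq z hz] at h3
      exact Subgroup.subset_closure h3
  have hPx : P x := by
    constructor
    · rw [hRdef, Subgroup.closure_le]
      intro h hh
      have hball : ∀ z, Δ.Adj x z → h ∈ ball Δ G z 2 := by
        intro z hz
        have h2 : h ∈ gen z := by rw [hgeneq z hz]; exact hh
        exact h2.1
      have hhG : h ∈ G := (mem_ball_iff.mp (hball y hxy)).1
      have : h ∈ ball Δ G x 2 := by
        refine mem_ball_iff.mpr ⟨hhG, ?_⟩
        intro z hz
        rcases Nat.lt_or_ge (Δ.dist x z) 1 with h0 | h1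
        · have hxz : x = z := hconn.dist_eq_zero_iff.mp (by omega)
          rw [← hxz]
          exact (mem_ball_iff.mp (hball y hxy)).2 x
            (le_trans (dist_le_one_of_adj hxy.symm) one_le_two)
        · rcases Nat.lt_or_ge (Δ.dist x z) 2 with h2' | h2
          · have hadj : Δ.Adj x z := SimpleGraph.dist_eq_one_iff_adj.mp (by omega)
            exact (mem_ball_iff.mp (hball z hadj)).2 z (by rw [SimpleGraph.dist_self]; omega)
          · have hdist : Δ.dist x z = 2 := le_antisymm hz h2
            obtain ⟨m, hm1, hm2⟩ := exists_mid_of_dist_two hconn hdist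
            exact (mem_ball_iff.mp (hball m hm1)).2 z
              (le_trans (dist_le_one_of_adj hm2) (by omega))
      exact this
    · intro g hg k hk
      obtain ⟨hgG, hgx⟩ := mem_vstab_iff.mp hg
      refine hconjR g ?_ k hk
      intro h hh
      have h3 : g * h * g⁻¹ ∈ gen (g y) := hgenconj g hgG y h hh
      have hgy : Δ.Adj x (g y) := by
        have := (hG g hgG x y).mpr hxy
        rwa [hgx] at this
      rw [hgeneq (g y) hgy] at h3
      exact Subgroup.subset_closure h3
  -- main induction on distance
  have main : ∀ n : ℕ, ∀ v : V, Δ.dist x v ≤ n → P v := by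
    intro n
    induction n with
    | zero =>
      intro v hv
      have hxv : x = v := hconn.dist_eq_zero_iff.mp (Nat.le_zero.mp hv)
      rwa [← hxv]
    | succ n ih =>
      intro v hv
      rcases Nat.lt_or_ge (Δ.dist x v) (n + 1) with hlt | hge
      · exact ih v (by omega)
      have hd : Δ.dist x v = n + 1 := le_antisymm hv hge
      rcases Nat.eq_zero_or_pos n with rfl | hn
      · exact hPz v (SimpleGraph.dist_eq_one_iff_adj.mp hd)
      obtain ⟨z1, u1, hz1v, hz1u, hdz, hdu⟩ := exists_two_step hconn hn hd
      have Pz1 := ih z1 hdz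
      have Pu1 := ih u1 hdu
      obtain ⟨g, hgvz, hgu⟩ := (hstar z1).1 u1 hz1u v hz1v
      obtain ⟨hgG, hgz1⟩ := mem_vstab_iff.mp hgvz
      constructor
      · intro k hk
        have hk1 : g⁻¹ * k * g ∈ R := by
          have := Pz1.2 g⁻¹ (inv_mem hgvz) k hk
          simpa using this
        have hk2 : g⁻¹ * k * g ∈ ball Δ G u1 2 := Pu1.1 hk1
        have hk3 : g * (g⁻¹ * k * g) * g⁻¹ ∈ ball Δ G (g u1) 2 :=
          conj_mem_ball hconn hG hgG hk2
        rw [hgu] at hk3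
        have heq : g * (g⁻¹ * k * g) * g⁻¹ = k := by group
        rwa [heq] at hk3
      · intro g' hg' k hk
        obtain ⟨hg'G, hg'v⟩ := mem_vstab_iff.mp hg'
        have hsmem : g⁻¹ * g' * g ∈ vstab G u1 := by
          refine mem_vstab_iff.mpr ⟨mul_mem (mul_mem (inv_mem hgG) hg'G) hgG, ?_⟩
          simp only [Equiv.Perm.mul_apply]
          rw [hgu, hg'v, ← hgu, Equiv.Perm.inv_apply_self]
        have hk1 : g⁻¹ * k * g ∈ R := by
          have := Pz1.2 g⁻¹ (inv_mem hgvz) k hk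
          simpa using this
        have hk2 : (g⁻¹ * g' * g) * (g⁻¹ * k * g) * (g⁻¹ * g' * g)⁻¹ ∈ R :=
          Pu1.2 _ hsmem _ hk1
        have hk3 := Pz1.2 g hgvz _ hk2
        have heq : g * ((g⁻¹ * g' * g) * (g⁻¹ * k * g) * (g⁻¹ * g' * g)⁻¹) * g⁻¹
            = g' * k * g'⁻¹ := by group
        rwa [heq] at hk3
  -- hence R is trivial
  have hR1 : ∀ k ∈ R, k = 1 := by
    intro k hk
    have hfixall : ∀ v : V, k v = v := by
      intro v
      have hball := (main (Δ.dist x v) v le_rfl).1 hk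
      exact (mem_ball_iff.mp hball).2 v (by rw [SimpleGraph.dist_self]; omega)
    exact Equiv.ext fun v => by simp [hfixall v]
  -- conclusion: every element of ball y 2 has p-power order
  intro g
  have hppow : ∀ q : ℕ, q.Prime → q ∣ orderOf (g : Equiv.Perm V) → q = p := by
    intro q hq hdvd
    by_contra hne
    have hm0 : orderOf (g : Equiv.Perm V) ≠ 0 := (orderOf_pos _).ne'
    set h := (g : Equiv.Perm V) ^ (orderOf (g : Equiv.Perm V) / q) with hh
    have horder : orderOf h = q := by
      rw [hh, orderOf_pow]
      rw [Nat.gcd_eq_right (Nat.div_dvd_of_dvd hdvd), Nat.div_div_self hdvd hm0]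
    have hmem : h ∈ ball Δ G y 2 := by
      rw [hh]
      exact pow_mem g.2 _
    have hgen : h ∈ gen y := ⟨hmem, by rw [horder]; exact hq, by rw [horder]; exact hne⟩
    have h1 : h = 1 := hR1 h (Subgroup.subset_closure hgen)
    rw [h1, orderOf_one] at horder
    exact hq.ne_one horder.symm
  have hpow : ∃ k : ℕ, orderOf (g : Equiv.Perm V) = p ^ k := by
    have key : ∀ m : ℕ, m ≠ 0 → (∀ q, q.Prime → q ∣ m → q = p) → ∃ k, m = p ^ k := by
      intro m
      induction m using Nat.strong_induction_on with
      | _ m ih =>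
        intro hm0 hprime
        rcases eq_or_ne m 1 with rfl | hm1
        · exact ⟨0, rfl⟩
        · obtain ⟨q, hq, hqd⟩ := Nat.exists_prime_and_dvd hm1
          have hqp := hprime q hq hqd
          obtain ⟨m', rfl⟩ := hqd
          have hm'0 : m' ≠ 0 := by
            rintro rfl
            simp at hm0
          have hm'lt : m' < q * m' := by
            have h2 := hq.one_lt
            have h3 : 0 < m' := Nat.pos_of_ne_zero hm'0
            calc m' = 1 * m' := (one_mul m').symm
            _ < q * m' := by exact (Nat.mul_lt_mul_right h3).mpr h2
          obtain ⟨k, hk⟩ := ih m' hm'lt hm'0 (fun r hr hrd => hprime r hr (hrd.mul_left q))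
          exact ⟨k + 1, by rw [hk, hqp, pow_succ, mul_comm]⟩
    exact key _ ((orderOf_pos _).ne') hppow
  obtain ⟨k, hk⟩ := hpow
  have horderg : orderOf g = p ^ k := by
    rw [← hk]
    exact (orderOf_injective (ball Δ G y 2).subtype (Subgroup.subtype_injective _) g).symm
  exact ⟨k, by rw [← horderg]; exact pow_orderOf_eq_one g⟩
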